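/- arXiv:hep-th/0207057 — 2 statements merged into one kernel-verified Lean document; each statement's English description precedes it below -/
import Mathlib

section
/- Let t ↦ x̃_t be a C² curve in the de Sitter hyperboloid dS ⊂ ℝ⁵ with g̃(x̃_t, ẋ̃_t) = 0 and g̃(x̃_t, ã_t) = -1 for all t (where ã_t is the ambient acceleration), and let Λ_t solve dΛ_t/dt = M_t ∘ Λ_t, Λ₀ = id, with M_t(v) = g̃(ẋ̃_t, v)·ã_t - g̃(ã_t, v)·ẋ̃_t. Then g̃(x̃_t, Λ_t y) = g̃(x̃₀, y) for every y ∈ ℝ⁵ and all t. -/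
/-- The Minkowski bilinear form of signature (1,4) on `ℝ⁵`. -/
noncomputable def mink (x y : Fin 5 → ℝ) : ℝ :=
  x 0 * y 0 - x 1 * y 1 - x 2 * y 2 - x 3 * y 3 - x 4 * y 4

lemma mink_hasDerivAt {p q : ℝ → Fin 5 → ℝ} {p' q' : Fin 5 → ℝ} {t : ℝ}
    (hp : HasDerivAt p p' t) (hq : HasDerivAt q q' t) :
    HasDerivAt (fun s => mink (p s) (q s)) (mink p' (q t) + mink (p t) q') t := by
  have hpi : ∀ i, HasDerivAt (fun s => p s i) (p' i) t := fun i => hasDerivAt_pi.mp hp i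
  have hqi : ∀ i, HasDerivAt (fun s => q s i) (q' i) t := fun i => hasDerivAt_pi.mp hq i
  have h := ((((((hpi 0).mul (hqi 0)).sub ((hpi 1).mul (hqi 1))).sub
      ((hpi 2).mul (hqi 2))).sub ((hpi 3).mul (hqi 3))).sub ((hpi 4).mul (hqi 4)))
  simp only [mink]
  convert h using 1
  · rfl
  · rfl
  · rfl
  · ring

/-- Along a de Sitter worldline `x̃_t` (with velocity `v` and ambient
acceleration `a` satisfying `g̃(x̃,ẋ̃) = 0`, `g̃(x̃,ã) = -1`), the solution of
the Fermi--Walker ODE `dΛ/dt = M_t ∘ Λ_t`, `Λ₀ = id`, with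
`M_t = g̃(ẋ̃_t,·)ã_t - g̃(ã_t,·)ẋ̃_t`, satisfies
`g̃(x̃_t, Λ_t y) = g̃(x̃₀, y)` for all `y` and `t`. -/
theorem stmt_8 (x v a : ℝ → (Fin 5 → ℝ))
    (hdS : ∀ t, mink (x t) (x t) = -1)
    (hx : ∀ t, HasDerivAt x (v t) t)
    (hxv : ∀ t, mink (x t) (v t) = 0)
    (hxa : ∀ t, mink (x t) (a t) = -1)
    (M : ℝ → ((Fin 5 → ℝ) →L[ℝ] (Fin 5 → ℝ)))
    (hM : ∀ t w, M t w = mink (v t) w • a t - mink (a t) w • v t)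
    (Λ : ℝ → ((Fin 5 → ℝ) →L[ℝ] (Fin 5 → ℝ)))
    (hΛ : ∀ t, HasDerivAt Λ ((M t).comp (Λ t)) t)
    (hΛ0 : Λ 0 = ContinuousLinearMap.id ℝ (Fin 5 → ℝ)) :
    ∀ t (y : Fin 5 → ℝ), mink (x t) (Λ t y) = mink (x 0) y := by
  intro t y
  have hf : ∀ s, HasDerivAt (fun s => mink (x s) (Λ s y)) 0 s := by
    intro s
    have hΛy : HasDerivAt (fun s => Λ s y) ((M s) (Λ s y)) s := by
      have := (hΛ s).clm_apply (hasDerivAt_const s y)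
      simpa using this
    have h := mink_hasDerivAt (hx s) hΛy
    have hz : mink (v s) (Λ s y) + mink (x s) ((M s) (Λ s y)) = 0 := by
      rw [hM]
      have hexp : mink (x s) (mink (v s) (Λ s y) • a s - mink (a s) (Λ s y) • v s)
          = mink (v s) (Λ s y) * mink (x s) (a s)
            - mink (a s) (Λ s y) * mink (x s) (v s) := by
        simp only [mink, Pi.sub_apply, Pi.smul_apply, smul_eq_mul]
        ring
      rw [hexp, hxa, hxv]
      ring
    rwa [hz] at h
  have hconst : ∀ s₁ s₂ : ℝ, mink (x s₁) (Λ s₁ y) = mink (x s₂) (Λ s₂ y) := by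
    intro s₁ s₂
    exact is_const_of_deriv_eq_zero (fun s => (hf s).differentiableAt)
      (fun s => (hf s).deriv) s₁ s₂
  rw [hconst t 0, hΛ0]
  rfl
end

section
/- Under the hypotheses of the previous statement (Λ_t the solution of the Fermi–Walker ODE along a de Sitter worldline x̃_t), the map Λ_t sends the orthogonal complement x̃₀^⊥ = { v : g̃(x̃₀, v) = 0 } bijectively onto x̃_t^⊥. -/
lemma mink_smul_right (x y : Fin 5 → ℝ) (c : ℝ) : mink x (c • y) = c * mink x y := by
  simp [mink]; ring

lemma mink_sub_right (x y z : Fin 5 → ℝ) : mink x (y - z) = mink x y - mink x z := by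
  simp [mink]; ring

lemma mink_nondeg (z : Fin 5 → ℝ) (h : ∀ w, mink z w = 0) : z = 0 := by
  funext i
  fin_cases i <;>
    [have := h (Pi.single 0 1); have := h (Pi.single 1 1); have := h (Pi.single 2 1);
     have := h (Pi.single 3 1); have := h (Pi.single 4 1)] <;>
    simp [mink, Pi.single_apply] at this <;> simpa using this

lemma mink_deriv {f g : ℝ → (Fin 5 → ℝ)} {f' g' : Fin 5 → ℝ} {t : ℝ}
    (hf : HasDerivAt f f' t) (hg : HasDerivAt g g' t) :
    HasDerivAt (fun s => mink (f s) (g s)) (mink f' (g t) + mink (f t) g') t := by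
  have hfi := hasDerivAt_pi.1 hf
  have hgi := hasDerivAt_pi.1 hg
  have h : HasDerivAt (fun s => f s 0 * g s 0 - f s 1 * g s 1 - f s 2 * g s 2
      - f s 3 * g s 3 - f s 4 * g s 4)
      ((f' 0 * g t 0 + f t 0 * g' 0) - (f' 1 * g t 1 + f t 1 * g' 1)
        - (f' 2 * g t 2 + f t 2 * g' 2) - (f' 3 * g t 3 + f t 3 * g' 3)
        - (f' 4 * g t 4 + f t 4 * g' 4)) t :=
    (((((hfi 0).mul (hgi 0)).sub ((hfi 1).mul (hgi 1))).sub
      ((hfi 2).mul (hgi 2))).sub ((hfi 3).mul (hgi 3))).sub ((hfi 4).mul (hgi 4))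
  convert h using 1
  all_goals (delta mink; ring)

/-- Along a de Sitter worldline `x̃_t` (with velocity `v` and ambient
acceleration `a` satisfying `g̃(x̃,ẋ̃) = 0`, `g̃(x̃,ã) = -1`), the solution of
the Fermi--Walker ODE `dΛ/dt = M_t ∘ Λ_t`, `Λ₀ = id`, with
`M_t = g̃(ẋ̃_t,·)ã_t - g̃(ã_t,·)ẋ̃_t`, maps the orthogonal
complement `x̃₀^⊥` bijectively onto `x̃_t^⊥` for every `t`. -/
theorem stmt_9 (x v a : ℝ → (Fin 5 → ℝ))
    (hdS : ∀ t, mink (x t) (x t) = -1)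
    (hx : ∀ t, HasDerivAt x (v t) t)
    (hxv : ∀ t, mink (x t) (v t) = 0)
    (hxa : ∀ t, mink (x t) (a t) = -1)
    (M : ℝ → ((Fin 5 → ℝ) →L[ℝ] (Fin 5 → ℝ)))
    (hM : ∀ t w, M t w = mink (v t) w • a t - mink (a t) w • v t)
    (Λ : ℝ → ((Fin 5 → ℝ) →L[ℝ] (Fin 5 → ℝ)))
    (hΛ : ∀ t, HasDerivAt Λ ((M t).comp (Λ t)) t)
    (hΛ0 : Λ 0 = ContinuousLinearMap.id ℝ (Fin 5 → ℝ)) :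
    ∀ t, Set.BijOn (Λ t) {w : Fin 5 → ℝ | mink (x 0) w = 0}
      {w : Fin 5 → ℝ | mink (x t) w = 0} := by
  -- pointwise derivative of the flow
  have hΛw : ∀ (w : Fin 5 → ℝ) t, HasDerivAt (fun s => Λ s w) (M t (Λ t w)) t := by
    intro w t
    have := (hΛ t).clm_apply (hasDerivAt_const t w)
    simpa using this
  -- mink of M against things
  have hminkM : ∀ t (u w : Fin 5 → ℝ),
      mink u (M t w) = mink (v t) w * mink u (a t) - mink (a t) w * mink u (v t) := by
    intro t u w
    rw [hM, mink_sub_right, mink_smul_right, mink_smul_right]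
  -- invariance of x·Λw
  have hinv : ∀ (w : Fin 5 → ℝ) t, mink (x t) (Λ t w) = mink (x 0) w := by
    intro w
    have hd : ∀ t, HasDerivAt (fun s => mink (x s) (Λ s w)) 0 t := by
      intro t
      have h := mink_deriv (hx t) (hΛw w t)
      have : mink (v t) (Λ t w) + mink (x t) (M t (Λ t w)) = 0 := by
        rw [hminkM, hxa t, hxv t]; ring
      rwa [this] at h
    intro t
    have := is_const_of_deriv_eq_zero (f := fun s => mink (x s) (Λ s w))
      (fun s => (hd s).differentiableAt) (fun s => (hd s).deriv) t 0
    simpa [hΛ0] using this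
  -- invariance of the bilinear form under Λ
  have hpres : ∀ (u w : Fin 5 → ℝ) t, mink (Λ t u) (Λ t w) = mink u w := by
    intro u w
    have hd : ∀ t, HasDerivAt (fun s => mink (Λ s u) (Λ s w)) 0 t := by
      intro t
      have h := mink_deriv (hΛw u t) (hΛw w t)
      have hsym : ∀ (p q : Fin 5 → ℝ), mink p q = mink q p := by
        intro p q; simp [mink]; ring
      have : mink (M t (Λ t u)) (Λ t w) + mink (Λ t u) (M t (Λ t w)) = 0 := by
        rw [hsym (M t (Λ t u)) (Λ t w), hminkM, hminkM]
        rw [hsym (Λ t w) (a t), hsym (Λ t w) (v t), hsym (Λ t u) (a t), hsym (Λ t u) (v t)]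
        ring
      rwa [this] at h
    intro t
    have := is_const_of_deriv_eq_zero (f := fun s => mink (Λ s u) (Λ s w))
      (fun s => (hd s).differentiableAt) (fun s => (hd s).deriv) t 0
    simpa [hΛ0] using this
  -- injectivity
  have hinj : ∀ t, Function.Injective (Λ t) := by
    intro t u u' h
    have hz : ∀ w, mink (u - u') w = 0 := by
      intro w
      have h1 := hpres (u - u') w t
      rw [map_sub, h, sub_self] at h1
      simpa [mink] using h1.symm
    have := mink_nondeg _ hz
    exact sub_eq_zero.1 this
  -- surjectivity
  have hsurj : ∀ t, Function.Surjective (Λ t) := by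
    intro t
    have : Function.Injective ((Λ t).toLinearMap) := hinj t
    exact (LinearMap.injective_iff_surjective_of_finrank_eq_finrank rfl).1 this
  intro t
  refine ⟨fun w hw => ?_, fun u _ u' _ h => hinj t h, fun w' hw' => ?_⟩
  · simp only [Set.mem_setOf_eq] at hw ⊢
    rw [hinv w t, hw]
  · obtain ⟨u, hu⟩ := hsurj t w'
    refine ⟨u, ?_, hu⟩
    simp only [Set.mem_setOf_eq] at hw' ⊢
    rw [← hinv u t, hu, hw']
end
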